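/- Let $M$ be a real symmetric positive definite $N\times N$ matrix whose largest eigenvalue $\lambda_{\max}$ satisfies $\lambda_{\max} < 1$. Then for every positive integer $K$, $\left| \log\det(I_N - M) + \sum_{m=1}^{K} \frac{1}{m}\,\mathrm{Tr}(M^m) \right| \le N\,\lambda_{\max}^{K}\, \log\!\left(\frac{1}{1 - \lambda_{\max}}\right)$. -/

import Mathlib

lemma tail_bound {x L : ℝ} (hx0 : 0 < x) (hxL : x ≤ L) (hL : L < 1) (K : ℕ) :
    |Real.log (1 - x) + ∑ m ∈ Finset.Icc 1 K, (1 / (m : ℝ)) * x ^ m| ≤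
      L ^ K * Real.log (1 / (1 - L)) := by
  have hx1 : x < 1 := lt_of_le_of_lt hxL hL
  have hxabs : |x| < 1 := by rw [abs_of_pos hx0]; exact hx1
  set f : ℕ → ℝ := fun n => x ^ (n + 1) / (n + 1) with hf
  have hs : HasSum f (-Real.log (1 - x)) :=
    Real.hasSum_pow_div_log_of_abs_lt_one hxabs
  have hIcc : ∑ m ∈ Finset.Icc 1 K, (1 / (m : ℝ)) * x ^ m
      = ∑ n ∈ Finset.range K, f n := by
    rw [← Finset.Ico_add_one_right_eq_Icc, Finset.sum_Ico_eq_sum_range]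
    have : K + 1 - 1 = K := rfl
    rw [this]
    apply Finset.sum_congr rfl
    intro n _
    simp only [hf]
    push_cast
    ring
  have htail : HasSum (fun n => f (n + K))
      (-Real.log (1 - x) - ∑ i ∈ Finset.range K, f i) := by
    rw [hasSum_nat_add_iff (f := f) K, sub_add_cancel]
    exact hs
  have hT0 : 0 ≤ -Real.log (1 - x) - ∑ i ∈ Finset.range K, f i :=
    htail.nonneg fun n => by positivity
  have hcomp : HasSum (fun n => x ^ K * f n) (x ^ K * (-Real.log (1 - x))) :=
    hs.mul_left _
  have hle : -Real.log (1 - x) - ∑ i ∈ Finset.range K, f i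
      ≤ x ^ K * (-Real.log (1 - x)) := by
    refine hasSum_le (fun n => ?_) htail hcomp
    show x ^ (n + K + 1) / ((n + K : ℕ) + 1 : ℝ) ≤ x ^ K * (x ^ (n + 1) / ((n : ℝ) + 1))
    rw [show x ^ (n + K + 1) = x ^ K * x ^ (n + 1) by ring, mul_div_assoc]
    gcongr
    omega
  have hlogx : 0 ≤ -Real.log (1 - x) := by
    rw [neg_nonneg]
    exact Real.log_nonpos (by linarith) (by linarith)
  have hloglog : -Real.log (1 - x) ≤ -Real.log (1 - L) := by
    rw [neg_le_neg_iff]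
    exact Real.log_le_log (by linarith) (by linarith)
  have hfin : x ^ K * (-Real.log (1 - x)) ≤ L ^ K * (-Real.log (1 - L)) :=
    mul_le_mul (pow_le_pow_left₀ hx0.le hxL K) hloglog hlogx (pow_nonneg (hx0.le.trans hxL) K)
  have hrw : Real.log (1 / (1 - L)) = -Real.log (1 - L) := by
    rw [one_div, Real.log_inv]
  rw [hrw]
  rw [hIcc, abs_le]
  constructor
  · nlinarith [pow_nonneg hx0.le K]
  · linarith

theorem stmt16 (N : ℕ) (A : Matrix (Fin N) (Fin N) ℝ) (hsymm : A.IsSymm)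
    (hpd : A.PosDef) (lammax : ℝ) (hmem : lammax ∈ spectrum ℝ A)
    (hmax : ∀ μ ∈ spectrum ℝ A, μ ≤ lammax) (hlt : lammax < 1)
    (K : ℕ) (hK : 0 < K) :
    |Real.log (Matrix.det (1 - A)) +
        ∑ m ∈ Finset.Icc 1 K, (1 / (m : ℝ)) * Matrix.trace (A ^ m)| ≤
      (N : ℝ) * lammax ^ K * Real.log (1 / (1 - lammax)) := by
  classical
  have hA : A.IsHermitian := hpd.1
  set ev : Fin N → ℝ := hA.eigenvalues with hev
  set U : Matrix (Fin N) (Fin N) ℝ := (Matrix.IsHermitian.eigenvectorUnitary hA : Matrix (Fin N) (Fin N) ℝ) with hU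
  have hUU : U * star U = 1 :=
    (Matrix.mem_unitaryGroup_iff).mp (Matrix.IsHermitian.eigenvectorUnitary hA).2
  have hUU' : star U * U = 1 :=
    (Matrix.mem_unitaryGroup_iff').mp (Matrix.IsHermitian.eigenvectorUnitary hA).2
  have hdiag : (Matrix.diagonal (RCLike.ofReal ∘ ev) : Matrix (Fin N) (Fin N) ℝ)
      = Matrix.diagonal ev := by
    congr 1
  have hspec : A = U * Matrix.diagonal ev * star U := by
    rw [← hdiag]; exact hA.spectral_theorem
  -- eigenvalue bounds
  have hev_pos : ∀ i, 0 < ev i := fun i => hpd.eigenvalues_pos i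
  have hev_le : ∀ i, ev i ≤ lammax := fun i =>
    hmax _ (hA.eigenvalues_mem_spectrum_real i)
  have hev_lt1 : ∀ i, ev i < 1 := fun i => lt_of_le_of_lt (hev_le i) hlt
  -- powers
  have hpow : ∀ m : ℕ, A ^ m = U * (Matrix.diagonal ev) ^ m * star U := by
    intro m
    induction m with
    | zero => simp [hUU]
    | succ m ih =>
        rw [pow_succ, ih, hspec, pow_succ]
        calc U * Matrix.diagonal ev ^ m * star U * (U * Matrix.diagonal ev * star U)
            = U * Matrix.diagonal ev ^ m * (star U * U) * Matrix.diagonal ev * star U := by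
              noncomm_ring
          _ = U * (Matrix.diagonal ev ^ m * Matrix.diagonal ev) * star U := by
              rw [hUU']; noncomm_ring
  have htrace : ∀ m : ℕ, Matrix.trace (A ^ m) = ∑ i, ev i ^ m := by
    intro m
    rw [hpow m, Matrix.trace_mul_cycle, hUU', Matrix.one_mul,
      Matrix.diagonal_pow, Matrix.trace_diagonal]
    simp [Pi.pow_apply]
  have hdet : Matrix.det (1 - A) = ∏ i, (1 - ev i) := by
    have h1 : (1 : Matrix (Fin N) (Fin N) ℝ) - A
        = U * Matrix.diagonal (fun i => 1 - ev i) * star U := by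
      have : Matrix.diagonal (fun i => (1 : ℝ) - ev i)
          = 1 - Matrix.diagonal ev := by
        rw [← Matrix.diagonal_one, ← Matrix.diagonal_sub]
      rw [this, Matrix.mul_sub, Matrix.sub_mul, Matrix.mul_one, hUU, ← hspec]
    rw [h1, Matrix.det_mul, Matrix.det_mul, mul_comm, ← mul_assoc, ← Matrix.det_mul, hUU',
      Matrix.det_one, one_mul, Matrix.det_diagonal]
  have hlog : Real.log (Matrix.det (1 - A)) = ∑ i, Real.log (1 - ev i) := by
    rw [hdet]
    exact Real.log_prod (fun i _ => (sub_pos.mpr (hev_lt1 i)).ne')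
  have hsum : ∑ m ∈ Finset.Icc 1 K, (1 / (m : ℝ)) * Matrix.trace (A ^ m)
      = ∑ i, ∑ m ∈ Finset.Icc 1 K, (1 / (m : ℝ)) * ev i ^ m := by
    rw [Finset.sum_comm]
    exact Finset.sum_congr rfl fun m _ => by rw [htrace, Finset.mul_sum]
  rw [hlog, hsum, ← Finset.sum_add_distrib]
  calc |∑ i, (Real.log (1 - ev i) + ∑ m ∈ Finset.Icc 1 K, (1 / (m : ℝ)) * ev i ^ m)|
      ≤ ∑ i, |Real.log (1 - ev i) + ∑ m ∈ Finset.Icc 1 K, (1 / (m : ℝ)) * ev i ^ m| :=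
        Finset.abs_sum_le_sum_abs _ _
    _ ≤ ∑ _i : Fin N, lammax ^ K * Real.log (1 / (1 - lammax)) :=
        Finset.sum_le_sum fun i _ => tail_bound (hev_pos i) (hev_le i) hlt K
    _ = (N : ℝ) * lammax ^ K * Real.log (1 / (1 - lammax)) := by
        rw [Finset.sum_const, Finset.card_fin, nsmul_eq_mul, mul_assoc]
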